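/- Let 0 < r1 ≤ r2, let n be an integer with 2 ≤ n ≤ 5, and let Ω be an isoperimetric region of volume v in S^1_{r1} × S^1_{r2} × R^n such that 0 < θ_m < β_n(r2) < θ_M and 0 < σ_m < β_n(r1) < σ_M. Then I_{S^1_{r2}×R^{n+1}}(v) − 2β_n(r2) ≤ I_{S^1_{r1}×S^1_{r2}×R^n}(v) and I_{S^1_{r1}×R^{n+1}}(v) − 2β_n(r1) ≤ I_{S^1_{r1}×S^1_{r2}×R^n}(v). -/

import Mathlib

open MeasureTheory Real ENNReal NNReal

noncomputable section

/-- The flat circle of radius `r` (circumference `2πr`), i.e. `ℝ / (2πr)ℤ`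
with the quotient (arc-length) metric. -/
abbrev Circ (r : ℝ) : Type := AddCircle (2 * Real.pi * r)

/-- `d`-dimensional Hausdorff (Riemannian) measure of a subset of a metric space. -/
noncomputable def haus (X : Type*) [EMetricSpace X] (d : ℕ) (s : Set X) : ℝ≥0∞ :=
  letI : MeasurableSpace X := borel X
  haveI : BorelSpace X := ⟨rfl⟩
  (MeasureTheory.Measure.hausdorffMeasure (d : ℝ) : Measure X) s

/-- A closed region is the closure of an open set. -/
def IsClosedRegion {X : Type*} [TopologicalSpace X] (U : Set X) : Prop :=
  ∃ V : Set X, IsOpen V ∧ U = closure V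

/-- The isoperimetric profile of an `m`-dimensional space `X`:
the infimum of the `(m-1)`-dimensional boundary measures of closed regions
of `m`-dimensional measure `v`. -/
noncomputable def isoProfile (X : Type*) [EMetricSpace X] (m : ℕ) (v : ℝ≥0∞) : ℝ≥0∞ :=
  ⨅ (U : Set X) (_ : IsClosedRegion U ∧ haus X m U = v), haus X (m - 1) (frontier U)

/-- An isoperimetric region in the `m`-dimensional space `X`. -/
def IsIsoRegion (X : Type*) [EMetricSpace X] (m : ℕ) (Ω : Set X) : Prop :=
  IsClosedRegion Ω ∧ haus X (m - 1) (frontier Ω) = isoProfile X m (haus X m Ω)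

/-- Euclidean `n`-space. -/
abbrev EucSp (n : ℕ) : Type := EuclideanSpace ℝ (Fin n)

/-- The Riemannian product `S¹_r × ℝ^m` (with the `ℓ²` product metric). -/
abbrev S1R (r : ℝ) (m : ℕ) : Type := WithLp 2 (Circ r × EucSp m)

/-- The Riemannian product `S¹_{r1} × S¹_{r2} × ℝ^n = T² × ℝ^n`. -/
abbrev T2R (r1 r2 : ℝ) (n : ℕ) : Type := WithLp 2 (Circ r1 × S1R r2 n)

/-- first circle coordinate of a point of `T² × ℝ^n` -/
def t2fst {r1 r2 : ℝ} {n : ℕ} (p : T2R r1 r2 n) : Circ r1 :=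
  (WithLp.equiv 2 (Circ r1 × S1R r2 n) p).1

/-- second circle coordinate of a point of `T² × ℝ^n` -/
def t2snd {r1 r2 : ℝ} {n : ℕ} (p : T2R r1 r2 n) : Circ r2 :=
  (WithLp.equiv 2 (Circ r2 × EucSp n) ((WithLp.equiv 2 (Circ r1 × S1R r2 n) p).2)).1

/-- Euclidean coordinate of a point of `T² × ℝ^n` -/
def t2euc {r1 r2 : ℝ} {n : ℕ} (p : T2R r1 r2 n) : EucSp n :=
  (WithLp.equiv 2 (Circ r2 × EucSp n) ((WithLp.equiv 2 (Circ r1 × S1R r2 n) p).2)).2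

/-- `ω_n`, the `n`-dimensional volume of the unit round sphere `Sⁿ ⊂ ℝ^{n+1}`. -/
noncomputable def omegaS (n : ℕ) : ℝ :=
  (haus (EucSp (n+1)) n (Metric.sphere (0 : EucSp (n+1)) 1)).toReal

/-- `β_n(r) = n^{(n-1)(n+1)} (2πr ω_{n-1})^{n+1} (1+n)^{-n²} ω_n^{-n}`. -/
noncomputable def betaC (n : ℕ) (r : ℝ) : ℝ :=
  (n : ℝ) ^ ((n-1)*(n+1)) * (2 * Real.pi * r * omegaS (n-1)) ^ (n+1) *
    ((1 + (n : ℝ)) ^ (n^2))⁻¹ * ((omegaS n) ^ n)⁻¹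

/-- The isoperimetric profile of `ℝ^m`: `I_{ℝ^m}(v) = m^{(m-1)/m} ω_{m-1}^{1/m} v^{(m-1)/m}`. -/
noncomputable def eucProfile (m : ℕ) (v : ℝ) : ℝ :=
  (m : ℝ) ^ (((m : ℝ) - 1)/m) * omegaS (m-1) ^ ((1 : ℝ)/m) * v ^ (((m : ℝ) - 1)/m)

/-- The region `S¹_{r1} × S¹_{r2} × B^n_R` in `T² × ℝ^n`. -/
def tball (r1 r2 : ℝ) (n : ℕ) (R : ℝ) : Set (T2R r1 r2 n) :=
  {p | ‖t2euc p‖ ≤ R}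

/-- `f_n(v) = V^{n+1}(∂(S¹_{r1} × S¹_{r2} × B^n_R))`, where `R > 0` is such that
`V^{n+2}(S¹_{r1} × S¹_{r2} × B^n_R) = v`. -/
noncomputable def fA (r1 r2 : ℝ) (n : ℕ) (v : ℝ≥0∞) : ℝ≥0∞ :=
  ⨅ (R : ℝ) (_ : 0 < R ∧ haus (T2R r1 r2 n) (n+2) (tball r1 r2 n R) = v),
    haus (T2R r1 r2 n) (n+1) (frontier (tball r1 r2 n R))

/-- The slice function `F₁(t) = V^{n+1}(Ω ∩ ({t} × S¹_{r2} × ℝ^n))`. -/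
noncomputable def sliceF1 {r1 r2 : ℝ} {n : ℕ} (Ω : Set (T2R r1 r2 n)) (t : Circ r1) : ℝ≥0∞ :=
  haus (T2R r1 r2 n) (n+1) (Ω ∩ {p | t2fst p = t})

/-- The slice function `F₂(s) = V^{n+1}(Ω ∩ (S¹_{r1} × {s} × ℝ^n))`. -/
noncomputable def sliceF2 {r1 r2 : ℝ} {n : ℕ} (Ω : Set (T2R r1 r2 n)) (s : Circ r2) : ℝ≥0∞ :=
  haus (T2R r1 r2 n) (n+1) (Ω ∩ {p | t2snd p = s})

/-- `θ_m`, the minimum (infimum) of the slice function `F₁`. -/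
noncomputable def thetaMin {r1 r2 : ℝ} {n : ℕ} (Ω : Set (T2R r1 r2 n)) : ℝ≥0∞ :=
  ⨅ t : Circ r1, sliceF1 Ω t

/-- `θ_M`, the maximum (supremum) of the slice function `F₁`. -/
noncomputable def thetaMax {r1 r2 : ℝ} {n : ℕ} (Ω : Set (T2R r1 r2 n)) : ℝ≥0∞ :=
  ⨆ t : Circ r1, sliceF1 Ω t

/-- `σ_m`, the minimum (infimum) of the slice function `F₂`. -/
noncomputable def sigmaMin {r1 r2 : ℝ} {n : ℕ} (Ω : Set (T2R r1 r2 n)) : ℝ≥0∞ :=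
  ⨅ s : Circ r2, sliceF2 Ω s

/-- `σ_M`, the maximum (supremum) of the slice function `F₂`. -/
noncomputable def sigmaMax {r1 r2 : ℝ} {n : ℕ} (Ω : Set (T2R r1 r2 n)) : ℝ≥0∞ :=
  ⨆ s : Circ r2, sliceF2 Ω s

/-- The region `S¹_r × B^m_R` in `S¹_r × ℝ^m`. -/
def s1ball (r : ℝ) (m : ℕ) (R : ℝ) : Set (S1R r m) :=
  {p | ‖(WithLp.equiv 2 (Circ r × EucSp m) p).2‖ ≤ R}

section HausAPI
variable {X : Type*} [EMetricSpace X] {Y : Type*} [EMetricSpace Y]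

lemma haus_mono {d : ℕ} {s t : Set X} (h : s ⊆ t) : haus X d s ≤ haus X d t := by
  unfold haus; exact measure_mono h

lemma haus_union_le {d : ℕ} (s t : Set X) : haus X d (s ∪ t) ≤ haus X d s + haus X d t := by
  unfold haus; exact measure_union_le s t

lemma haus_image_isometry {f : X → Y} (hf : Isometry f) (d : ℕ) (s : Set X) :
    haus Y d (f '' s) = haus X d s := by
  unfold haus
  letI : MeasurableSpace X := borel X
  haveI : BorelSpace X := ⟨rfl⟩
  letI : MeasurableSpace Y := borel Y
  haveI : BorelSpace Y := ⟨rfl⟩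
  exact hf.hausdorffMeasure_image (Or.inl (by positivity)) s

lemma haus_image_le {f : X → Y} {s : Set X} (hf : LipschitzOnWith 1 f s) (d : ℕ) :
    haus Y d (f '' s) ≤ haus X d s := by
  unfold haus
  letI : MeasurableSpace X := borel X
  haveI : BorelSpace X := ⟨rfl⟩
  letI : MeasurableSpace Y := borel Y
  haveI : BorelSpace Y := ⟨rfl⟩
  simpa using hf.hausdorffMeasure_image_le (d := (d:ℝ)) (by positivity)

lemma haus_inter_add_diff {d : ℕ} (A : Set X) {P : Set X}
    (hP : MeasurableSet[borel X] P) :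
    haus X d (A ∩ P) + haus X d (A \ P) = haus X d A := by
  unfold haus
  exact measure_inter_add_diff A hP
end HausAPI
set_option linter.unusedSectionVars false
section ProdL2
variable {α β : Type*} [MetricSpace α] [MetricSpace β]

lemma dist_l2 (x y : WithLp 2 (α × β)) :
    dist x y = Real.sqrt (dist x.fst y.fst ^ 2 + dist x.snd y.snd ^ 2) := by
  rw [WithLp.prod_dist_eq_add (p := 2) (by norm_num)]
  rw [Real.sqrt_eq_rpow]
  norm_num

lemma lipschitz_l2_fst : LipschitzWith 1 (fun x : WithLp 2 (α × β) => x.fst) := by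
  apply LipschitzWith.of_dist_le_mul
  intro x y
  rw [NNReal.coe_one, one_mul, dist_l2]
  calc dist x.fst y.fst = Real.sqrt (dist x.fst y.fst ^ 2) := by
        rw [Real.sqrt_sq dist_nonneg]
    _ ≤ _ := by
        apply Real.sqrt_le_sqrt; nlinarith [sq_nonneg (dist x.snd y.snd)]

lemma lipschitz_l2_snd : LipschitzWith 1 (fun x : WithLp 2 (α × β) => x.snd) := by
  apply LipschitzWith.of_dist_le_mul
  intro x y
  rw [NNReal.coe_one, one_mul, dist_l2]
  calc dist x.snd y.snd = Real.sqrt (dist x.snd y.snd ^ 2) := by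
        rw [Real.sqrt_sq dist_nonneg]
    _ ≤ _ := by
        apply Real.sqrt_le_sqrt; nlinarith [sq_nonneg (dist x.fst y.fst)]

/-- build a point of `WithLp 2 (α × β)` -/
abbrev mkL2 (a : α) (b : β) : WithLp 2 (α × β) := (WithLp.equiv 2 (α × β)).symm (a, b)

@[simp] lemma mkL2_fst (a : α) (b : β) : (mkL2 a b).fst = a := rfl
@[simp] lemma mkL2_snd (a : α) (b : β) : (mkL2 a b).snd = b := rfl
@[simp] lemma mkL2_eta (x : WithLp 2 (α × β)) : mkL2 x.fst x.snd = x := rfl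

/-- the second-coordinate embedding is an isometry -/
lemma isometry_mkL2_right (a : α) : Isometry (fun b : β => mkL2 a b) := by
  apply Isometry.of_dist_eq
  intro b1 b2
  rw [dist_l2]
  simp [Real.sqrt_sq dist_nonneg]

lemma continuous_l2_mk {γ : Type*} [TopologicalSpace γ] {f : γ → α} {g : γ → β}
    (hf : Continuous f) (hg : Continuous g) : Continuous (fun c => mkL2 (f c) (g c)) :=
  (WithLp.prod_continuous_toLp _ _ _).comp (hf.prodMk hg)

lemma continuous_l2_fst : Continuous (fun x : WithLp 2 (α × β) => x.fst) :=
  lipschitz_l2_fst.continuous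

lemma continuous_l2_snd : Continuous (fun x : WithLp 2 (α × β) => x.snd) :=
  lipschitz_l2_snd.continuous
end ProdL2
section CircleFacts
variable {p : ℝ}

lemma circ_dist_coe_le (x y : ℝ) : dist (x : AddCircle p) (y : AddCircle p) ≤ |x - y| := by
  rw [dist_eq_norm, ← AddCircle.coe_sub]
  simpa using QuotientAddGroup.norm_mk_le_norm (S := AddSubgroup.zmultiples p) (m := x - y)

lemma circ_dist_coe_eq (hp : 0 < p) (x y : ℝ) (h : |x - y| ≤ p / 2) :
    dist (x : AddCircle p) (y : AddCircle p) = |x - y| := by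
  rw [dist_eq_norm, ← AddCircle.coe_sub]
  refine (AddCircle.norm_coe_eq_abs_iff p hp.ne').mpr ?_
  rwa [abs_of_pos hp]
end CircleFacts
section DimLemma
variable {P : ℝ} {n : ℕ}

lemma wrap_lipschitz_surjective :
    ∃ f : EucSp (n+1) → WithLp 2 (AddCircle P × EucSp n),
      LipschitzWith 1 f ∧ Function.Surjective f := by
  refine ⟨fun x => mkL2 ((x 0 : ℝ) : AddCircle P)
      ((WithLp.equiv 2 (Fin n → ℝ)).symm (fun i => x i.succ)), ?_, ?_⟩
  · apply LipschitzWith.of_dist_le_mul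
    intro x y
    have hx : dist x y = Real.sqrt (∑ i : Fin (n+1), dist (x i) (y i) ^ 2) :=
      EuclideanSpace.dist_eq x y
    rw [NNReal.coe_one, one_mul, dist_l2, hx, Fin.sum_univ_succ]
    simp only [mkL2_fst, mkL2_snd]
    apply Real.sqrt_le_sqrt
    have h2 : dist ((WithLp.equiv 2 (Fin n → ℝ)).symm (fun i => x i.succ))
        ((WithLp.equiv 2 (Fin n → ℝ)).symm (fun i => y i.succ)) ^ 2
        = ∑ i : Fin n, dist (x i.succ) (y i.succ) ^ 2 := by
      rw [EuclideanSpace.dist_eq, Real.sq_sqrt (by positivity)]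
      rfl
    rw [h2]
    have h1 : dist ((x 0 : ℝ) : AddCircle P) ((y 0 : ℝ) : AddCircle P) ^ 2
        ≤ dist (x 0) (y 0) ^ 2 := by
      have := circ_dist_coe_le (p := P) (x 0) (y 0)
      rw [Real.dist_eq]
      nlinarith [dist_nonneg (x := ((x 0 : ℝ) : AddCircle P)) (y := ((y 0 : ℝ) : AddCircle P))]
    linarith
  · intro z
    obtain ⟨b, hb⟩ : ∃ b : ℝ, (b : AddCircle P) = z.fst := Quotient.exists_rep z.fst
    refine ⟨(WithLp.equiv 2 (Fin (n+1) → ℝ)).symm (Fin.cons b (fun i => z.snd i)), ?_⟩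
    have key : ∀ w w' : WithLp 2 (AddCircle P × EucSp n),
        w.fst = w'.fst → w.snd = w'.snd → w = w' := fun w w' h1 h2 => congrArg (WithLp.toLp 2) (Prod.ext h1 h2)
    apply key
    · simpa using hb
    · ext i
      show (Fin.cons b (fun i => z.snd i) : ∀ _ : Fin (n+1), ℝ) i.succ = z.snd i
      simp
  
lemma haus_S1Rn_zero (k : ℕ) (hk : n + 1 < k) :
    haus (WithLp 2 (AddCircle P × EucSp n)) k Set.univ = 0 := by
  obtain ⟨f, hf, hsurj⟩ := wrap_lipschitz_surjective (P := P) (n := n)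
  unfold haus
  letI : MeasurableSpace (WithLp 2 (AddCircle P × EucSp n)) :=
    borel (WithLp 2 (AddCircle P × EucSp n))
  haveI : BorelSpace (WithLp 2 (AddCircle P × EucSp n)) := ⟨rfl⟩
  have hdim : dimH (Set.univ : Set (WithLp 2 (AddCircle P × EucSp n))) ≤ (n+1 : ℕ) := by
    have h1 : dimH (Set.range f) ≤ dimH (Set.univ : Set (EucSp (n+1))) := hf.dimH_range_le
    rw [hsurj.range_eq] at h1
    refine h1.trans ?_
    rw [dimH_univ_eq_finrank]
    simp [finrank_euclideanSpace_fin]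
  have hlt : dimH (Set.univ : Set (WithLp 2 (AddCircle P × EucSp n))) < ((k : ℝ≥0) : ℝ≥0∞) := by
    refine hdim.trans_lt ?_
    norm_cast
  have h0 := hausdorffMeasure_of_dimH_lt hlt
  convert h0 using 2
  simp
end DimLemma
section Core
variable {p : ℝ} {Z : Type*} [MetricSpace Z]

lemma core_cut (hp : 0 < p) (d : ℕ) (hZ : haus Z (d+1) Set.univ = 0)
    (U : Set (WithLp 2 (AddCircle p × Z))) (hU : IsClosedRegion U)
    (t0 : AddCircle p) :
    ∃ Ω' : Set (WithLp 2 (ℝ × Z)), IsClosedRegion Ω' ∧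
      haus (WithLp 2 (ℝ × Z)) (d+1) Ω' = haus (WithLp 2 (AddCircle p × Z)) (d+1) U ∧
      haus (WithLp 2 (ℝ × Z)) d (frontier Ω') ≤
        haus (WithLp 2 (AddCircle p × Z)) d (frontier U)
          + 2 * haus (WithLp 2 (AddCircle p × Z)) d (U ∩ {q | q.fst = t0}) := by
  haveI : Fact (0 < p) := ⟨hp⟩
  obtain ⟨V, hVopen, hUV⟩ := hU
  -- choose a representative of the cut point
  obtain ⟨a0, -, ha0⟩ := AddCircle.eq_coe_Ico t0
  -- the unrolling coordinate
  set c : AddCircle p → ℝ := fun t => (AddCircle.equivIco p a0 t : ℝ) with hc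
  have c1 : ∀ t : AddCircle p, ((c t : ℝ) : AddCircle p) = t := by
    intro t
    have := (AddCircle.equivIco p a0).symm_apply_apply t
    exact this
  have c2 : ∀ t, c t ∈ Set.Ico a0 (a0 + p) := fun t => (AddCircle.equivIco p a0 t).2
  have c3 : ∀ x ∈ Set.Ico a0 (a0 + p), c ((x : ℝ) : AddCircle p) = x := by
    intro x hx
    have h := c1 ((x : ℝ) : AddCircle p)
    exact (AddCircle.coe_eq_coe_iff_of_mem_Ico (c2 _) hx).mp h
  have ha0mem : a0 ∈ Set.Ico a0 (a0 + p) := Set.left_mem_Ico.mpr (by linarith)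
  have c4 : ∀ t, c t = a0 ↔ t = t0 := by
    intro t
    constructor
    · intro h; rw [← c1 t, h, ha0]
    · intro h; rw [h, ← ha0, c3 a0 ha0mem]
  -- the two maps
  set g : (WithLp 2 (ℝ × Z)) → (WithLp 2 (AddCircle p × Z)) := fun y => mkL2 ((y.fst : ℝ) : AddCircle p) y.snd with hg
  set e : (WithLp 2 (AddCircle p × Z)) → (WithLp 2 (ℝ × Z)) := fun q => mkL2 (c q.fst) q.snd with he
  have l2ext : ∀ w w' : (WithLp 2 (AddCircle p × Z)), w.fst = w'.fst → w.snd = w'.snd → w = w' :=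
    fun w w' h1 h2 => congrArg (WithLp.toLp 2) (Prod.ext h1 h2)
  have l2extY : ∀ w w' : (WithLp 2 (ℝ × Z)), w.fst = w'.fst → w.snd = w'.snd → w = w' :=
    fun w w' h1 h2 => congrArg (WithLp.toLp 2) (Prod.ext h1 h2)
  have etaX : ∀ q : (WithLp 2 (AddCircle p × Z)), mkL2 q.fst q.snd = q := fun q => rfl
  have ge : ∀ q : (WithLp 2 (AddCircle p × Z)), g (e q) = q := by
    intro q; apply l2ext <;> simp [hg, he, c1]
  have einj : Function.Injective e := by
    intro q q' h
    rw [← ge q, ← ge q', h]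
  have eg : ∀ y : (WithLp 2 (ℝ × Z)), y.fst ∈ Set.Ico a0 (a0 + p) → e (g y) = y := by
    intro y hy; apply l2extY <;> simp [hg, he, c3 _ hy]
  have glip : LipschitzWith 1 g := by
    apply LipschitzWith.of_dist_le_mul
    intro y y'
    rw [NNReal.coe_one, one_mul, dist_l2, dist_l2]
    simp only [hg, mkL2_fst, mkL2_snd]
    apply Real.sqrt_le_sqrt
    have := circ_dist_coe_le (p := p) y.fst y'.fst
    have h2 := dist_nonneg (x := ((y.fst : ℝ) : AddCircle p)) (y := ((y'.fst : ℝ) : AddCircle p))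
    rw [Real.dist_eq]
    nlinarith
  have gcont : Continuous g := glip.continuous
  -- e is distance preserving on sets where c is within a half-period window
  have eiso : ∀ q q' : (WithLp 2 (AddCircle p × Z)), |c q.fst - c q'.fst| ≤ p / 2 → dist (e q) (e q') = dist q q' := by
    intro q q' hqq
    rw [dist_l2, dist_l2]
    simp only [he, mkL2_fst, mkL2_snd]
    congr 2
    rw [Real.dist_eq]
    rw [← circ_dist_coe_eq hp _ _ hqq, c1, c1]
  -- the two pieces
  set P0 : Set (WithLp 2 (AddCircle p × Z)) := {q | c q.fst ∈ Set.Ico a0 (a0 + p/2)} with hP0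
  have hP0meas : MeasurableSet[borel (WithLp 2 (AddCircle p × Z))] P0 := by
    letI : MeasurableSpace (WithLp 2 (AddCircle p × Z)) := borel (WithLp 2 (AddCircle p × Z))
    haveI : BorelSpace (WithLp 2 (AddCircle p × Z)) := ⟨rfl⟩
    letI : MeasurableSpace (AddCircle p) := borel (AddCircle p)
    haveI : BorelSpace (AddCircle p) := ⟨rfl⟩
    have himg : P0 = (fun q : (WithLp 2 (AddCircle p × Z)) => q.fst) ⁻¹'
        (((↑) : ℝ → AddCircle p) '' Set.Ico a0 (a0 + p/2)) := by
      ext q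
      simp only [hP0, Set.mem_setOf_eq, Set.mem_preimage, Set.mem_image]
      constructor
      · intro h; exact ⟨c q.fst, h, c1 q.fst⟩
      · rintro ⟨x, hx, hxq⟩
        have hx' : x ∈ Set.Ico a0 (a0 + p) := ⟨hx.1, by have := hx.2; linarith⟩
        rw [← hxq, c3 x hx']; exact hx
    rw [himg]
    apply (continuous_l2_fst.measurable)
    have : ((↑) : ℝ → AddCircle p) '' Set.Ico a0 (a0 + p/2)
        = (((↑) : ℝ → AddCircle p) '' Set.Ioo a0 (a0 + p/2)) ∪ {((a0 : ℝ) : AddCircle p)} := by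
      rw [← Set.image_singleton, ← Set.image_union]
      congr 1
      rw [Set.union_comm, Set.singleton_union, Set.Ioo_insert_left]
      have : (0:ℝ) < p/2 := by linarith
      linarith
    rw [this]
    exact ((QuotientAddGroup.isOpenMap_coe _ isOpen_Ioo).measurableSet).union
      (measurableSet_singleton _)
  -- main measure identity
  have E1 : ∀ (k : ℕ) (A : Set (WithLp 2 (AddCircle p × Z))), haus (WithLp 2 (ℝ × Z)) k (e '' A) = haus (WithLp 2 (AddCircle p × Z)) k A := by
    intro k A
    apply le_antisymm
    · have hsplit : e '' A ⊆ e '' (A ∩ P0) ∪ e '' (A \ P0) := by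
        rw [← Set.image_union]
        apply Set.image_mono
        rw [Set.inter_union_diff]
      refine le_trans (haus_mono hsplit) ?_
      refine le_trans (haus_union_le _ _) ?_
      have h1 : haus (WithLp 2 (ℝ × Z)) k (e '' (A ∩ P0)) ≤ haus (WithLp 2 (AddCircle p × Z)) k (A ∩ P0) := by
        apply haus_image_le
        rw [lipschitzOnWith_iff_dist_le_mul]
        intro q hq q' hq'
        rw [NNReal.coe_one, one_mul, eiso]
        have h1 := hq.2; have h2 := hq'.2
        simp only [hP0, Set.mem_setOf_eq, Set.mem_Ico] at h1 h2
        rw [abs_sub_le_iff]; constructor <;> linarith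
      have h2 : haus (WithLp 2 (ℝ × Z)) k (e '' (A \ P0)) ≤ haus (WithLp 2 (AddCircle p × Z)) k (A \ P0) := by
        apply haus_image_le
        rw [lipschitzOnWith_iff_dist_le_mul]
        intro q hq q' hq'
        rw [NNReal.coe_one, one_mul, eiso]
        have hq1 : c q.fst ∈ Set.Ico (a0 + p/2) (a0 + p) := by
          have hnot := hq.2
          simp only [hP0, Set.mem_setOf_eq, Set.mem_Ico, not_and, not_lt] at hnot
          exact ⟨hnot (c2 q.fst).1, (c2 q.fst).2⟩
        have hq2 : c q'.fst ∈ Set.Ico (a0 + p/2) (a0 + p) := by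
          have hnot := hq'.2
          simp only [hP0, Set.mem_setOf_eq, Set.mem_Ico, not_and, not_lt] at hnot
          exact ⟨hnot (c2 q'.fst).1, (c2 q'.fst).2⟩
        rw [abs_sub_le_iff]
        constructor <;> [nlinarith [hq1.1, hq1.2, hq2.1, hq2.2]; nlinarith [hq1.1, hq1.2, hq2.1, hq2.2]]
      calc haus (WithLp 2 (ℝ × Z)) k (e '' (A ∩ P0)) + haus (WithLp 2 (ℝ × Z)) k (e '' (A \ P0))
          ≤ haus (WithLp 2 (AddCircle p × Z)) k (A ∩ P0) + haus (WithLp 2 (AddCircle p × Z)) k (A \ P0) := add_le_add h1 h2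
        _ = haus (WithLp 2 (AddCircle p × Z)) k A := haus_inter_add_diff A hP0meas
    · have hge : g '' (e '' A) = A := by
        ext q
        constructor
        · rintro ⟨y, ⟨q', hq', rfl⟩, rfl⟩; rwa [ge q']
        · intro hq; exact ⟨e q, ⟨q, hq, rfl⟩, ge q⟩
      calc haus (WithLp 2 (AddCircle p × Z)) k A = haus (WithLp 2 (AddCircle p × Z)) k (g '' (e '' A)) := by rw [hge]
        _ ≤ haus (WithLp 2 (ℝ × Z)) k (e '' A) := haus_image_le (LipschitzWith.lipschitzOnWith glip (s := e '' A)) k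
  -- isometric copies of Z
  have sliceX : ∀ (k : ℕ) (t : AddCircle p) (S : Set Z),
      haus (WithLp 2 (AddCircle p × Z)) k ((fun z => (mkL2 t z : (WithLp 2 (AddCircle p × Z)))) '' S) = haus Z k S :=
    fun k t S => haus_image_isometry (isometry_mkL2_right t) k S
  have sliceY : ∀ (k : ℕ) (a : ℝ) (S : Set Z),
      haus (WithLp 2 (ℝ × Z)) k ((fun z => (mkL2 a z : (WithLp 2 (ℝ × Z)))) '' S) = haus Z k S :=
    fun k a S => haus_image_isometry (isometry_mkL2_right a) k S
  set Λ : Set (WithLp 2 (AddCircle p × Z)) := {q | q.fst = t0} with hΛ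
  have hΛimg : Λ = (fun z => (mkL2 t0 z : (WithLp 2 (AddCircle p × Z)))) '' Set.univ := by
    ext q
    constructor
    · intro hq
      have hq' : q.fst = t0 := hq
      exact ⟨q.snd, trivial, by apply l2ext <;> simp [hq'.symm]⟩
    · rintro ⟨z, -, rfl⟩
      show (mkL2 t0 z : (WithLp 2 (AddCircle p × Z))).fst = t0
      simp
  have hΛnull : haus (WithLp 2 (AddCircle p × Z)) (d+1) Λ = 0 := by rw [hΛimg, sliceX]; exact hZ
  set Zset : Set Z := {z | (mkL2 t0 z : (WithLp 2 (AddCircle p × Z))) ∈ U} with hZset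
  have hZsetimgX : (fun z => (mkL2 t0 z : (WithLp 2 (AddCircle p × Z)))) '' Zset = U ∩ Λ := by
    ext q
    constructor
    · rintro ⟨z, hz, rfl⟩
      exact ⟨hz, by show (mkL2 t0 z : (WithLp 2 (AddCircle p × Z))).fst = t0; simp⟩
    · rintro ⟨hqU, hqΛ⟩
      have hq' : q.fst = t0 := hqΛ
      refine ⟨q.snd, ?_, by apply l2ext <;> simp [hq'.symm]⟩
      show (mkL2 t0 q.snd : (WithLp 2 (AddCircle p × Z))) ∈ U
      have : (mkL2 t0 q.snd : (WithLp 2 (AddCircle p × Z))) = q := by apply l2ext <;> simp [hq'.symm]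
      rwa [this]
  -- topology of U
  have hUclosed : IsClosed U := hUV ▸ isClosed_closure
  have hVU : V ⊆ interior U := hVopen.subset_interior_iff.mpr (hUV ▸ subset_closure)
  have hUint : U = closure (interior U) := by
    apply Set.Subset.antisymm
    · conv_lhs => rw [hUV]
      exact closure_mono hVU
    · calc closure (interior U) ⊆ closure U := closure_mono interior_subset
        _ = U := hUclosed.closure_eq
  -- density of the complement of the slice
  have hDdense : Dense (Λᶜ : Set (WithLp 2 (AddCircle p × Z))) := by
    rw [dense_iff_inter_open]
    rintro O hO ⟨q, hq⟩
    by_cases hqΛ : q ∈ Λ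
    · have hq' : q.fst = t0 := hqΛ
      obtain ⟨ε, hε, hball⟩ := Metric.isOpen_iff.mp hO q hq
      set δ := min (ε/2) (p/2) with hδ
      have hδ0 : 0 < δ := lt_min (by linarith) (by linarith)
      have hδp : δ < p := lt_of_le_of_lt (min_le_right _ _) (by linarith)
      have hδε : δ < ε := lt_of_le_of_lt (min_le_left _ _) (by linarith)
      refine ⟨mkL2 ((a0 + δ : ℝ) : AddCircle p) q.snd, hball ?_, ?_⟩
      · rw [Metric.mem_ball]
        have hd : dist (mkL2 ((a0 + δ : ℝ) : AddCircle p) q.snd : (WithLp 2 (AddCircle p × Z))) q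
            = dist ((a0 + δ : ℝ) : AddCircle p) q.fst := by
          rw [← etaX q, dist_l2]
          simp [Real.sqrt_sq dist_nonneg]
        rw [hd, hq', ← ha0]
        refine lt_of_le_of_lt (circ_dist_coe_le _ _) ?_
        rw [abs_of_pos (by linarith : (0:ℝ) < a0 + δ - a0)]
        linarith
      · show ¬ ((mkL2 ((a0 + δ : ℝ) : AddCircle p) q.snd : (WithLp 2 (AddCircle p × Z))) ∈ Λ)
        have : (mkL2 ((a0 + δ : ℝ) : AddCircle p) q.snd : (WithLp 2 (AddCircle p × Z))).fst
            = ((a0 + δ : ℝ) : AddCircle p) := rfl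
        intro hmem
        have hco : ((a0 + δ : ℝ) : AddCircle p) = ((a0 : ℝ) : AddCircle p) := by
          have h1 : (mkL2 ((a0 + δ : ℝ) : AddCircle p) q.snd : (WithLp 2 (AddCircle p × Z))).fst = t0 := hmem
          rw [this] at h1; rw [h1, ha0]
        have hmem1 : a0 + δ ∈ Set.Ico a0 (a0 + p) := ⟨by linarith, by linarith⟩
        have := (AddCircle.coe_eq_coe_iff_of_mem_Ico hmem1 ha0mem).mp hco
        linarith
    · exact ⟨q, hq, hqΛ⟩
  have closure_open_inter : ∀ W : Set (WithLp 2 (AddCircle p × Z)), IsOpen W → closure (W ∩ Λᶜ) = closure W := by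
    intro W hW
    apply Set.Subset.antisymm (closure_mono Set.inter_subset_left)
    intro x hx
    rw [_root_.mem_closure_iff] at hx ⊢
    intro O hO hxO
    obtain ⟨y, hyO, hyW⟩ := hx O hO hxO
    obtain ⟨z, hz⟩ := hDdense.inter_open_nonempty (O ∩ W) (hO.inter hW) ⟨y, hyO, hyW⟩
    exact ⟨z, hz.1.1, hz.1.2, hz.2⟩
  -- the unrolled region
  set G : Set (WithLp 2 (ℝ × Z)) := {y | y.fst ∈ Set.Ioo a0 (a0+p)} with hG
  have hGopen : IsOpen G := isOpen_Ioo.preimage continuous_l2_fst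
  set V' : Set (WithLp 2 (ℝ × Z)) := g ⁻¹' (interior U) ∩ G with hV'
  have hV'open : IsOpen V' := (isOpen_interior.preimage gcont).inter hGopen
  set Ω' : Set (WithLp 2 (ℝ × Z)) := closure V' with hΩ'
  have idA : ∀ S : Set (WithLp 2 (AddCircle p × Z)), e '' (S ∩ Λᶜ) = g ⁻¹' S ∩ G := by
    intro S; ext y; constructor
    · rintro ⟨q, ⟨hqS, hqD⟩, rfl⟩
      have hqt : q.fst ≠ t0 := hqD
      refine ⟨?_, ?_⟩
      · show g (e q) ∈ S; rw [ge]; exact hqS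
      · show (e q).fst ∈ Set.Ioo a0 (a0+p)
        have h1 := c2 q.fst
        have h2 : c q.fst ≠ a0 := fun h => hqt ((c4 _).mp h)
        show c q.fst ∈ Set.Ioo a0 (a0+p)
        exact ⟨lt_of_le_of_ne h1.1 (Ne.symm h2), h1.2⟩
    · rintro ⟨hyS, hyG⟩
      have hyG' : y.fst ∈ Set.Ioo a0 (a0+p) := hyG
      refine ⟨g y, ⟨hyS, ?_⟩, eg y (Set.mem_Ico_of_Ioo hyG')⟩
      show ¬ ((g y : (WithLp 2 (AddCircle p × Z))) ∈ Λ)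
      intro hmem
      have h1 : ((y.fst : ℝ) : AddCircle p) = t0 := hmem
      rw [← ha0] at h1
      have := (AddCircle.coe_eq_coe_iff_of_mem_Ico (Set.mem_Ico_of_Ioo hyG') ha0mem).mp h1
      have := hyG'.1; linarith
  have hV'img : V' = e '' (interior U ∩ Λᶜ) := (idA _).symm
  have key1a : Ω' ⊆ g ⁻¹' U := by
    refine (closure_mono Set.inter_subset_left).trans ?_
    refine (gcont.closure_preimage_subset _).trans ?_
    rw [← hUint]
  have key1sub : Ω' ∩ G ⊆ e '' (U ∩ Λᶜ) := by
    rw [idA U]; exact Set.inter_subset_inter_left _ key1a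
  have key1sup : e '' (U ∩ Λᶜ) ⊆ Ω' ∩ G := by
    rintro _ ⟨q, ⟨hqU, hqD⟩, rfl⟩
    have hqt : q.fst ≠ t0 := hqD
    constructor
    · have hcl : q ∈ closure (interior U ∩ Λᶜ) := by
        rw [closure_open_inter _ isOpen_interior, ← hUint]; exact hqU
      have hcont : ContinuousAt e q := by
        have hqt' : q.fst ≠ ((a0 : ℝ) : AddCircle p) := by rwa [ha0]
        have hca : ContinuousAt (AddCircle.equivIco p a0) q.fst :=
          AddCircle.continuousAt_equivIco p a0 hqt'
        have h1 : ContinuousAt (fun q : (WithLp 2 (AddCircle p × Z)) => c q.fst) q :=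
          (continuous_subtype_val.continuousAt.comp hca).comp
            continuous_l2_fst.continuousAt
        have h2 : ContinuousAt (fun q : (WithLp 2 (AddCircle p × Z)) => ((c q.fst, q.snd) : ℝ × Z)) q :=
          h1.prodMk continuous_l2_snd.continuousAt
        exact ((WithLp.prod_continuous_toLp 2 ℝ Z).continuousAt).comp h2
      have hmem := mem_closure_image hcont hcl
      rw [← hV'img] at hmem
      exact hmem
    · show (e q).fst ∈ Set.Ioo a0 (a0+p)
      have h1 := c2 q.fst
      have h2 : c q.fst ≠ a0 := fun h => hqt ((c4 _).mp h)
      show c q.fst ∈ Set.Ioo a0 (a0+p)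
      exact ⟨lt_of_le_of_ne h1.1 (Ne.symm h2), h1.2⟩
  have key1eq : Ω' ∩ G = e '' (U ∩ Λᶜ) := Set.Subset.antisymm key1sub key1sup
  have key2 : Ω' ⊆ {y : (WithLp 2 (ℝ × Z)) | y.fst ∈ Set.Icc a0 (a0+p)} := by
    apply closure_minimal ?_ (isClosed_Icc.preimage continuous_l2_fst)
    exact fun y hy => Set.mem_Icc_of_Ioo hy.2
  have hΩa : ∀ a : ℝ, ((a : ℝ) : AddCircle p) = t0 →
      Ω' ∩ {y : (WithLp 2 (ℝ × Z)) | y.fst = a} ⊆ (fun z => (mkL2 a z : (WithLp 2 (ℝ × Z)))) '' Zset := by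
    rintro a hat y ⟨hy1, hy2⟩
    have hy2' : y.fst = a := hy2
    have hgy : g y ∈ U := key1a hy1
    refine ⟨y.snd, ?_, by apply l2extY <;> simp [hy2'.symm]⟩
    show (mkL2 t0 y.snd : (WithLp 2 (AddCircle p × Z))) ∈ U
    have : (g y : (WithLp 2 (AddCircle p × Z))) = mkL2 t0 y.snd := by
      apply l2ext <;> simp [hg, hy2', hat]
    rwa [this] at hgy
  -- volume identities
  have hUD : haus (WithLp 2 (AddCircle p × Z)) (d+1) (U ∩ Λᶜ) = haus (WithLp 2 (AddCircle p × Z)) (d+1) U := by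
    apply le_antisymm (haus_mono Set.inter_subset_left)
    have hsplit : U ⊆ (U ∩ Λᶜ) ∪ Λ := by
      intro q hq; by_cases h : q ∈ Λ
      exacts [Or.inr h, Or.inl ⟨hq, h⟩]
    refine (haus_mono hsplit).trans ((haus_union_le _ _).trans ?_)
    rw [hΛnull, add_zero]
  have hHnull : ∀ a : ℝ, haus (WithLp 2 (ℝ × Z)) (d+1) {y : (WithLp 2 (ℝ × Z)) | y.fst = a} = 0 := by
    intro a
    have himg : {y : (WithLp 2 (ℝ × Z)) | y.fst = a} = (fun z => (mkL2 a z : (WithLp 2 (ℝ × Z)))) '' Set.univ := by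
      ext y
      constructor
      · intro hy
        have hy' : y.fst = a := hy
        exact ⟨y.snd, trivial, by apply l2extY <;> simp [hy'.symm]⟩
      · rintro ⟨z, -, rfl⟩
        show (mkL2 a z : (WithLp 2 (ℝ × Z))).fst = a
        simp
    rw [himg, sliceY]; exact hZ
  have hvol : haus (WithLp 2 (ℝ × Z)) (d+1) Ω' = haus (WithLp 2 (AddCircle p × Z)) (d+1) U := by
    apply le_antisymm
    · have hsplit : Ω' ⊆ (Ω' ∩ G) ∪ ({y : (WithLp 2 (ℝ × Z)) | y.fst = a0} ∪ {y : (WithLp 2 (ℝ × Z)) | y.fst = a0 + p}) := by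
        intro y hy
        have hicc := key2 hy
        have h1 := hicc.1
        have h2 := hicc.2
        rcases lt_or_eq_of_le h1 with h1' | h1'
        · rcases lt_or_eq_of_le h2 with h2' | h2'
          · exact Or.inl ⟨hy, h1', h2'⟩
          · exact Or.inr (Or.inr h2')
        · exact Or.inr (Or.inl h1'.symm)
      refine (haus_mono hsplit).trans ((haus_union_le _ _).trans ?_)
      refine le_trans (add_le_add le_rfl (haus_union_le _ _)) ?_
      rw [hHnull a0, hHnull (a0+p), add_zero, add_zero, key1eq, E1, hUD]
    · rw [← hUD, ← E1 (d+1), ← key1eq]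
      exact haus_mono Set.inter_subset_left
  -- frontier bound
  have hfr : frontier Ω' ⊆ (e '' (frontier U ∩ Λᶜ)) ∪
      ((Ω' ∩ {y : (WithLp 2 (ℝ × Z)) | y.fst = a0}) ∪ (Ω' ∩ {y : (WithLp 2 (ℝ × Z)) | y.fst = a0 + p})) := by
    intro y hy
    have hyΩ : y ∈ Ω' := isClosed_closure.frontier_subset hy
    have hyint : y ∉ interior Ω' := hy.2
    have hyV : y ∉ V' := fun h => hyint (interior_maximal subset_closure hV'open h)
    have hicc := key2 hyΩ
    rcases lt_or_eq_of_le hicc.1 with h1' | h1'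
    · rcases lt_or_eq_of_le hicc.2 with h2' | h2'
      · have hyG : y ∈ Ω' ∩ G := ⟨hyΩ, h1', h2'⟩
        have hyE := key1sub hyG
        have hyNV : y ∉ e '' (interior U ∩ Λᶜ) := by rwa [← hV'img]
        left
        obtain ⟨q, hq, rfl⟩ := hyE
        refine ⟨q, ⟨?_, hq.2⟩, rfl⟩
        rw [hUclosed.frontier_eq]
        refine ⟨hq.1, fun hqint => hyNV ⟨q, ⟨hqint, hq.2⟩, rfl⟩⟩
      · exact Or.inr (Or.inr ⟨hyΩ, h2'⟩)
    · exact Or.inr (Or.inl ⟨hyΩ, h1'.symm⟩)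
  have hfrb : haus (WithLp 2 (ℝ × Z)) d (frontier Ω') ≤
      haus (WithLp 2 (AddCircle p × Z)) d (frontier U) + 2 * haus (WithLp 2 (AddCircle p × Z)) d (U ∩ Λ) := by
    refine (haus_mono hfr).trans ((haus_union_le _ _).trans ?_)
    refine le_trans (add_le_add le_rfl (haus_union_le _ _)) ?_
    have hb1 : haus (WithLp 2 (ℝ × Z)) d (e '' (frontier U ∩ Λᶜ)) ≤ haus (WithLp 2 (AddCircle p × Z)) d (frontier U) := by
      rw [E1]; exact haus_mono Set.inter_subset_left
    have hbZ : haus Z d Zset = haus (WithLp 2 (AddCircle p × Z)) d (U ∩ Λ) := by rw [← hZsetimgX, sliceX]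
    have hb2 : ∀ a : ℝ, ((a : ℝ) : AddCircle p) = t0 →
        haus (WithLp 2 (ℝ × Z)) d (Ω' ∩ {y : (WithLp 2 (ℝ × Z)) | y.fst = a}) ≤ haus (WithLp 2 (AddCircle p × Z)) d (U ∩ Λ) := by
      intro a hat
      refine (haus_mono (hΩa a hat)).trans ?_
      rw [sliceY, hbZ]
    have hco1 : ((a0 : ℝ) : AddCircle p) = t0 := ha0
    have hco2 : ((a0 + p : ℝ) : AddCircle p) = t0 := by
      rw [AddCircle.coe_add_period, ha0]
    calc haus (WithLp 2 (ℝ × Z)) d (e '' (frontier U ∩ Λᶜ)) +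
          (haus (WithLp 2 (ℝ × Z)) d (Ω' ∩ {y : (WithLp 2 (ℝ × Z)) | y.fst = a0}) + haus (WithLp 2 (ℝ × Z)) d (Ω' ∩ {y : (WithLp 2 (ℝ × Z)) | y.fst = a0 + p}))
        ≤ haus (WithLp 2 (AddCircle p × Z)) d (frontier U) + (haus (WithLp 2 (AddCircle p × Z)) d (U ∩ Λ) + haus (WithLp 2 (AddCircle p × Z)) d (U ∩ Λ)) :=
          add_le_add hb1 (add_le_add (hb2 a0 hco1) (hb2 (a0+p) hco2))
      _ = haus (WithLp 2 (AddCircle p × Z)) d (frontier U) + 2 * haus (WithLp 2 (AddCircle p × Z)) d (U ∩ Λ) := by rw [two_mul]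
  exact ⟨Ω', ⟨V', hV'open, rfl⟩, hvol, hfrb⟩
end Core
section Transport
variable {X : Type*} [EMetricSpace X] {Y : Type*} [EMetricSpace Y]

lemma isoProfile_le_boundary {m : ℕ} {U : Set X} (hU : IsClosedRegion U) {v : ℝ≥0∞}
    (hv : haus X m U = v) : isoProfile X m v ≤ haus X (m-1) (frontier U) := by
  unfold isoProfile
  exact iInf₂_le U ⟨hU, hv⟩

lemma isClosedRegion_image (φ : X ≃ᵢ Y) {U : Set X} (h : IsClosedRegion U) :
    IsClosedRegion (φ '' U) := by
  obtain ⟨V, hV, rfl⟩ := h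
  exact ⟨φ '' V, φ.toHomeomorph.isOpenMap V hV, φ.toHomeomorph.image_closure V⟩

lemma isoProfile_congr (φ : X ≃ᵢ Y) (m : ℕ) (v : ℝ≥0∞) :
    isoProfile Y m v ≤ isoProfile X m v := by
  unfold isoProfile
  apply le_iInf₂
  rintro U ⟨hU, hv⟩
  have h1 : haus Y m (φ '' U) = v := by rw [haus_image_isometry φ.isometry]; exact hv
  have h2 : frontier (φ '' U) = φ '' frontier U := (φ.toHomeomorph.image_frontier U).symm
  calc (⨅ (W : Set Y) (_ : IsClosedRegion W ∧ haus Y m W = v), haus Y (m-1) (frontier W))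
      ≤ haus Y (m-1) (frontier (φ '' U)) := iInf₂_le _ ⟨isClosedRegion_image φ hU, h1⟩
    _ = haus X (m-1) (frontier U) := by rw [h2, haus_image_isometry φ.isometry]

lemma isoProfile_eq (φ : X ≃ᵢ Y) (m : ℕ) (v : ℝ≥0∞) :
    isoProfile X m v = isoProfile Y m v :=
  le_antisymm (isoProfile_congr φ.symm m v) (isoProfile_congr φ m v)
end Transport

section Equivs
variable {α β γ : Type*} [MetricSpace α] [MetricSpace β] [MetricSpace γ]

lemma dist_l2_3 (x y : WithLp 2 (α × WithLp 2 (β × γ))) :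
    dist x y = Real.sqrt (dist x.fst y.fst^2 + dist x.snd.fst y.snd.fst^2
      + dist x.snd.snd y.snd.snd^2) := by
  rw [dist_l2, dist_l2 x.snd y.snd, Real.sq_sqrt (by positivity)]
  congr 1
  ring

/-- swap the two first factors of a triple `ℓ²` product -/
def swapIso : WithLp 2 (α × WithLp 2 (β × γ)) ≃ᵢ WithLp 2 (β × WithLp 2 (α × γ)) where
  toFun q := mkL2 q.snd.fst (mkL2 q.fst q.snd.snd)
  invFun q := mkL2 q.snd.fst (mkL2 q.fst q.snd.snd)
  left_inv _ := rfl
  right_inv _ := rfl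
  isometry_toFun := by
    apply Isometry.of_dist_eq
    intro x y
    rw [dist_l2_3, dist_l2_3]
    simp only [mkL2_fst, mkL2_snd]
    congr 1
    ring

/-- prepend a real coordinate to the Euclidean factor -/
def consE {n : ℕ} (x : ℝ) (v : EucSp n) : EucSp (n+1) :=
  (WithLp.equiv 2 (Fin (n+1) → ℝ)).symm (Fin.cons x (fun i => v i))

lemma consE_zero {n : ℕ} (x : ℝ) (v : EucSp n) : consE x v 0 = x := rfl

lemma consE_succ {n : ℕ} (x : ℝ) (v : EucSp n) (i : Fin n) : consE x v i.succ = v i := by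
  show (Fin.cons x (fun i => v i) : ∀ _ : Fin (n+1), ℝ) i.succ = v i
  simp

lemma dist_consE_sq {n : ℕ} (x x' : ℝ) (v v' : EucSp n) :
    dist (consE x v) (consE x' v')^2 = dist x x'^2 + dist v v'^2 := by
  rw [EuclideanSpace.dist_eq, Real.sq_sqrt (by positivity), Fin.sum_univ_succ]
  simp only [consE_zero, consE_succ]
  rw [EuclideanSpace.dist_eq (x := v), Real.sq_sqrt (by positivity)]

/-- merge `ℝ × (S¹ × ℝⁿ)` into `S¹ × ℝ^{n+1}` -/
def assembleIso (q : ℝ) (n : ℕ) : WithLp 2 (ℝ × S1R q n) ≃ᵢ S1R q (n+1) where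
  toFun y := mkL2 y.snd.fst (consE y.fst y.snd.snd)
  invFun z := mkL2 (z.snd 0) (mkL2 z.fst
    ((WithLp.equiv 2 (Fin n → ℝ)).symm (fun i => z.snd i.succ)))
  left_inv y := by
    apply congrArg (WithLp.toLp 2); apply Prod.ext
    · rfl
    · apply congrArg (WithLp.toLp 2); apply Prod.ext
      · rfl
      · ext i
        exact consE_succ y.fst y.snd.snd i
  right_inv z := by
    apply congrArg (WithLp.toLp 2); apply Prod.ext
    · rfl
    · show consE (z.snd 0) ((WithLp.equiv 2 (Fin n → ℝ)).symm (fun i => z.snd i.succ)) = z.snd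
      ext i
      refine Fin.cases ?_ ?_ i
      · rfl
      · intro j
        rw [consE_succ]
        rfl
  isometry_toFun := by
    apply Isometry.of_dist_eq
    intro x y
    rw [dist_l2_3, dist_l2]
    simp only [mkL2_fst, mkL2_snd]
    rw [dist_consE_sq]
    congr 1
    ring
end Equivs
/-- Lemma 5 of the paper.
Let `0 < r1 ≤ r2`, `2 ≤ n ≤ 5`, and let `Ω` be an isoperimetric region of volume `v`
in `S¹_{r1} × S¹_{r2} × ℝⁿ` with `0 < θ_m < β_n(r2) < θ_M` and
`0 < σ_m < β_n(r1) < σ_M`.  Then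
`I_{S¹_{r2}×ℝ^{n+1}}(v) − 2β_n(r2) ≤ I_{S¹_{r1}×S¹_{r2}×ℝⁿ}(v)` and
`I_{S¹_{r1}×ℝ^{n+1}}(v) − 2β_n(r1) ≤ I_{S¹_{r1}×S¹_{r2}×ℝⁿ}(v)`
(stated with the subtraction moved to the right-hand side). -/
theorem profile_lower_bound_mixed_case (r1 r2 : ℝ) (hr1 : 0 < r1) (hr12 : r1 ≤ r2)
    (n : ℕ) (hn2 : 2 ≤ n) (hn5 : n ≤ 5) (v : ℝ)
    (Ω : Set (T2R r1 r2 n)) (hΩ : IsIsoRegion (T2R r1 r2 n) (n+2) Ω)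
    (hvol : haus (T2R r1 r2 n) (n+2) Ω = ENNReal.ofReal v)
    (hθ1 : 0 < thetaMin Ω) (hθ2 : thetaMin Ω < ENNReal.ofReal (betaC n r2))
    (hθ3 : ENNReal.ofReal (betaC n r2) < thetaMax Ω)
    (hσ1 : 0 < sigmaMin Ω) (hσ2 : sigmaMin Ω < ENNReal.ofReal (betaC n r1))
    (hσ3 : ENNReal.ofReal (betaC n r1) < sigmaMax Ω) :
    isoProfile (S1R r2 (n+1)) (n+2) (ENNReal.ofReal v)
      ≤ isoProfile (T2R r1 r2 n) (n+2) (ENNReal.ofReal v)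
          + ENNReal.ofReal (2 * betaC n r2) ∧
    isoProfile (S1R r1 (n+1)) (n+2) (ENNReal.ofReal v)
      ≤ isoProfile (T2R r1 r2 n) (n+2) (ENNReal.ofReal v)
          + ENNReal.ofReal (2 * betaC n r1) := by
  have hΩfr : haus (T2R r1 r2 n) (n+1) (frontier Ω)
      = isoProfile (T2R r1 r2 n) (n+2) (ENNReal.ofReal v) := by
    have h := hΩ.2
    rw [hvol] at h
    exact h
  constructor
  · -- cut the first circle
    obtain ⟨t0, ht0⟩ : ∃ t, sliceF1 Ω t < ENNReal.ofReal (betaC n r2) := by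
      have h := hθ2
      unfold thetaMin at h
      exact iInf_lt_iff.mp h
    have hp1 : 0 < 2 * Real.pi * r1 := by have := Real.pi_pos; nlinarith
    have hZ : haus (S1R r2 n) (n+2) Set.univ = 0 := haus_S1Rn_zero (n+2) (by omega)
    obtain ⟨Ω', hreg, hvol', hbd⟩ := core_cut (Z := S1R r2 n) hp1 (n+1) hZ Ω hΩ.1 t0
    have hvol'' : haus (WithLp 2 (ℝ × S1R r2 n)) (n+2) Ω' = ENNReal.ofReal v := by
      rw [hvol']; exact hvol
    have hslice : haus (T2R r1 r2 n) (n+1) (Ω ∩ {q | q.fst = t0}) = sliceF1 Ω t0 := rfl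
    rw [← isoProfile_eq (assembleIso r2 n) (n+2) (ENNReal.ofReal v)]
    refine le_trans (isoProfile_le_boundary hreg hvol'') ?_
    refine le_trans hbd ?_
    rw [hslice, hΩfr]
    apply add_le_add le_rfl
    rw [ENNReal.ofReal_mul (by norm_num : (0:ℝ) ≤ 2)]
    rw [show ENNReal.ofReal (2:ℝ) = (2:ℝ≥0∞) by norm_num]
    exact mul_le_mul_right ht0.le _
  · -- cut the second circle
    obtain ⟨s0, hs0⟩ : ∃ s, sliceF2 Ω s < ENNReal.ofReal (betaC n r1) := by
      have h := hσ2
      unfold sigmaMin at h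
      exact iInf_lt_iff.mp h
    set ψ : T2R r1 r2 n ≃ᵢ WithLp 2 (Circ r2 × S1R r1 n) :=
      swapIso (α := Circ r1) (β := Circ r2) (γ := EucSp n) with hψ
    have hp2 : 0 < 2 * Real.pi * r2 := by have := Real.pi_pos; nlinarith
    have hZ : haus (S1R r1 n) (n+2) Set.univ = 0 := haus_S1Rn_zero (n+2) (by omega)
    have hreg2 : IsClosedRegion (ψ '' Ω) := isClosedRegion_image ψ hΩ.1
    obtain ⟨Ω', hreg, hvol', hbd⟩ := core_cut (Z := S1R r1 n) hp2 (n+1) hZ (ψ '' Ω) hreg2 s0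
    have hvol'' : haus (WithLp 2 (ℝ × S1R r1 n)) (n+2) Ω' = ENNReal.ofReal v := by
      rw [hvol', haus_image_isometry ψ.isometry]; exact hvol
    have hsl : (ψ '' Ω) ∩ {y | y.fst = s0} = ψ '' (Ω ∩ {q | t2snd q = s0}) := by
      ext y
      constructor
      · rintro ⟨⟨q, hq, rfl⟩, hfst⟩
        exact ⟨q, ⟨hq, hfst⟩, rfl⟩
      · rintro ⟨q, ⟨hq, hq2⟩, rfl⟩
        exact ⟨⟨q, hq, rfl⟩, hq2⟩
    have hslice : haus (WithLp 2 (Circ r2 × S1R r1 n)) (n+1) ((ψ '' Ω) ∩ {y | y.fst = s0})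
        = sliceF2 Ω s0 := by
      rw [hsl, haus_image_isometry ψ.isometry]
      rfl
    have hfr2 : haus (WithLp 2 (Circ r2 × S1R r1 n)) (n+1) (frontier (ψ '' Ω))
        = haus (T2R r1 r2 n) (n+1) (frontier Ω) := by
      have h := ψ.toHomeomorph.image_frontier Ω
      have h2 : (⇑ψ.toHomeomorph : T2R r1 r2 n → WithLp 2 (Circ r2 × S1R r1 n)) = ⇑ψ := rfl
      rw [h2] at h
      rw [← h, haus_image_isometry ψ.isometry]
    rw [← isoProfile_eq (assembleIso r1 n) (n+2) (ENNReal.ofReal v)]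
    refine le_trans (isoProfile_le_boundary hreg hvol'') ?_
    refine le_trans hbd ?_
    rw [hslice, hfr2, hΩfr]
    apply add_le_add le_rfl
    rw [ENNReal.ofReal_mul (by norm_num : (0:ℝ) ≤ 2)]
    rw [show ENNReal.ofReal (2:ℝ) = (2:ℝ≥0∞) by norm_num]
    exact mul_le_mul_right hs0.le _

end
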